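/- Let $X = (X_1,\dots,X_d)$ be a $d$-tuple of self-adjoint $n\times n$ complex matrices with $\sum_{j=1}^d X_j^2 \leq I_n$. Then $\|\sum_{j=1}^d X_j \otimes \overline{X_j}\| \leq 1$, where $\overline{X_j}$ denotes entrywise complex conjugation and the norm is the operator norm on $M_{n^2}(\mathbb{C})$. -/

import Mathlib

open Matrix
open scoped Kronecker ComplexOrder Matrix.Norms.L2Operator

set_option maxHeartbeats 1000000
set_option synthInstance.maxHeartbeats 400000

private lemma trace_lem {n : ℕ} (U W : Matrix (Fin n) (Fin n) ℂ) :
    trace (Uᴴ * W) = ∑ p : Fin n × Fin n, starRingEnd ℂ (U p.1 p.2) * W p.1 p.2 := by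
  simp [trace, mul_apply, conjTranspose_apply, Fintype.sum_prod_type, diag]
  exact Finset.sum_comm

private lemma trace_nonneg' {N : Type*} [Fintype N] [DecidableEq N] (M : Matrix N N ℂ)
    (h : M.PosSemidef) : 0 ≤ M.trace := by
  rw [Matrix.trace]
  apply Finset.sum_nonneg
  intro i _
  have := h.dotProduct_mulVec_nonneg (Pi.single i 1)
  simpa [dotProduct, mulVec, Pi.single_apply, mul_ite, ite_mul] using this

private lemma klem {n : ℕ} (A B V : Matrix (Fin n) (Fin n) ℂ) :
    star (fun p : Fin n × Fin n => V p.1 p.2) ⬝ᵥ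
      ((A ⊗ₖ B.map (starRingEnd ℂ)) *ᵥ (fun p : Fin n × Fin n => V p.1 p.2))
      = trace (Vᴴ * A * V * Bᴴ) := by
  have lhs : star (fun p : Fin n × Fin n => V p.1 p.2) ⬝ᵥ
      ((A ⊗ₖ B.map (starRingEnd ℂ)) *ᵥ (fun p : Fin n × Fin n => V p.1 p.2))
      = ∑ i, ∑ l, ∑ k, ∑ m, starRingEnd ℂ (V i l) * A i k * V k m * starRingEnd ℂ (B l m) := by
    simp only [dotProduct, mulVec, Fintype.sum_prod_type, kroneckerMap_apply, map_apply,
      Pi.star_apply, Complex.star_def, Finset.mul_sum]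
    refine Finset.sum_congr rfl fun i _ => Finset.sum_congr rfl fun l _ =>
      Finset.sum_congr rfl fun k _ => Finset.sum_congr rfl fun m _ => by ring
  have rhs : trace (Vᴴ * A * V * Bᴴ)
      = ∑ l, ∑ m, ∑ k, ∑ i, starRingEnd ℂ (V i l) * A i k * V k m * starRingEnd ℂ (B l m) := by
    simp only [trace, diag, mul_apply, conjTranspose_apply, Complex.star_def,
      Finset.sum_mul, Finset.mul_sum]
  rw [lhs, rhs]
  rw [Finset.sum_comm]
  refine Finset.sum_congr rfl fun l _ => ?_
  calc ∑ i, ∑ k, ∑ m, starRingEnd ℂ (V i l) * A i k * V k m * starRingEnd ℂ (B l m)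
      = ∑ k, ∑ i, ∑ m, starRingEnd ℂ (V i l) * A i k * V k m * starRingEnd ℂ (B l m) :=
        Finset.sum_comm
    _ = ∑ k, ∑ m, ∑ i, starRingEnd ℂ (V i l) * A i k * V k m * starRingEnd ℂ (B l m) :=
        Finset.sum_congr rfl fun k _ => Finset.sum_comm
    _ = ∑ m, ∑ k, ∑ i, starRingEnd ℂ (V i l) * A i k * V k m * starRingEnd ℂ (B l m) :=
        Finset.sum_comm

private lemma bridge {m : Type*} [Fintype m] [DecidableEq m] (T : Matrix m m ℂ)
    (hT : T.IsHermitian)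
    (h1 : ∀ y : m → ℂ, ‖star y ⬝ᵥ (T *ᵥ y)‖ ≤ (star y ⬝ᵥ y).re) :
    ‖T‖ ≤ 1 := by
  rw [Matrix.cstar_norm_def]
  set a := toEuclideanCLM (𝕜 := ℂ) T with ha_def
  have ha : _root_.IsSelfAdjoint a := hT.isSelfAdjoint.map (toEuclideanCLM (𝕜 := ℂ))
  have happ : ∀ x : EuclideanSpace ℂ m,
      a x = (WithLp.equiv 2 _).symm (T *ᵥ (WithLp.equiv 2 _ x)) := by
    intro x
    conv_lhs => rw [← (WithLp.equiv 2 _).symm_apply_apply x]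
    rfl
  have hres : ∀ x : EuclideanSpace ℂ m,
      |RCLike.re (inner ℂ (a x) x : ℂ)| ≤ RCLike.re (inner ℂ x x : ℂ) := by
    intro x
    set y := WithLp.equiv 2 (m → ℂ) x with hy
    have e1 : (inner ℂ (a x) x : ℂ) = starRingEnd ℂ (star y ⬝ᵥ (T *ᵥ y)) := by
      rw [happ]
      simp only [PiLp.inner_apply, dotProduct, RCLike.inner_apply, map_sum, _root_.map_mul,
        Complex.conj_conj, Pi.star_apply, WithLp.equiv_symm_apply, PiLp.toLp_apply]
      simp [Complex.star_def, mul_comm]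
      rfl
    have e2 : RCLike.re (inner ℂ x x : ℂ) = (star y ⬝ᵥ y).re := by
      rw [EuclideanSpace.inner_eq_star_dotProduct, dotProduct_comm]; rfl
    rw [e1, e2]
    calc |RCLike.re (starRingEnd ℂ (star y ⬝ᵥ (T *ᵥ y)))|
        ≤ ‖starRingEnd ℂ (star y ⬝ᵥ (T *ᵥ y))‖ := Complex.abs_re_le_norm _
      _ = ‖star y ⬝ᵥ (T *ᵥ y)‖ := Complex.norm_conj _
      _ ≤ (star y ⬝ᵥ y).re := h1 y
  have hone : _root_.IsSelfAdjoint
      (1 : EuclideanSpace ℂ m →L[ℂ] EuclideanSpace ℂ m) := .one _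
  have h1' : a ≤ 1 := by
    rw [← sub_nonneg, ContinuousLinearMap.nonneg_iff_isPositive]
    refine ContinuousLinearMap.isPositive_def'.mpr ⟨hone.sub ha, fun x => ?_⟩
    have := hres x
    have h1x : RCLike.re (inner ℂ ((1 - a) x) x : ℂ)
        = RCLike.re (inner ℂ x x : ℂ) - RCLike.re (inner ℂ (a x) x : ℂ) := by
      simp [inner_sub_left]
    rw [ContinuousLinearMap.reApplyInnerSelf, h1x]
    cases abs_le.mp this; linarith
  have h2' : -1 ≤ a := by
    rw [← sub_nonneg, ContinuousLinearMap.nonneg_iff_isPositive, sub_neg_eq_add]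
    refine ContinuousLinearMap.isPositive_def'.mpr ⟨ha.add hone, fun x => ?_⟩
    have := hres x
    have h1x : RCLike.re (inner ℂ ((a + 1) x) x : ℂ)
        = RCLike.re (inner ℂ (a x) x : ℂ) + RCLike.re (inner ℂ x x : ℂ) := by
      simp [inner_add_left]
    rw [ContinuousLinearMap.reApplyInnerSelf, h1x]
    cases abs_le.mp this; linarith
  rcases isEmpty_or_nonempty m with hm | hm
  · haveI : Subsingleton (EuclideanSpace ℂ m) :=
      ⟨fun u v => (WithLp.equiv 2 _).injective (funext fun i => (IsEmpty.false i).elim)⟩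
    haveI : Subsingleton (EuclideanSpace ℂ m →L[ℂ] EuclideanSpace ℂ m) :=
      ⟨fun f g => ContinuousLinearMap.ext fun x => Subsingleton.elim _ _⟩
    rw [Subsingleton.elim a 0, norm_zero]
    exact zero_le_one
  · haveI : Nontrivial (EuclideanSpace ℂ m) := by
      refine ⟨0, (WithLp.equiv 2 _).symm (fun _ => 1), fun h => ?_⟩
      have := congrFun (congrArg (WithLp.equiv 2 (m → ℂ)) h) (Classical.arbitrary m)
      simpa using this
    have hs1 : ∀ x ∈ spectrum ℝ a, x ≤ 1 := by
      rw [← le_algebraMap_iff_spectrum_le (ha := ha), _root_.map_one]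
      exact h1'
    have hs2 : ∀ x ∈ spectrum ℝ a, -1 ≤ x := by
      rw [← algebraMap_le_iff_le_spectrum (a := a) (ha := ha), map_neg, _root_.map_one]
      exact h2'
    rcases CStarAlgebra.norm_or_neg_norm_mem_spectrum ha with h | h
    · exact hs1 _ h
    · linarith [hs2 _ h]

/-- If `X₁,…,X_d` are self-adjoint `n × n` matrices with `∑ Xⱼ² ≤ I`, then
`‖∑ Xⱼ ⊗ conj(Xⱼ)‖ ≤ 1` in the operator norm. -/
theorem stmt_1 (d n : ℕ) (X : Fin d → Matrix (Fin n) (Fin n) ℂ)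
    (hX : ∀ j, (X j).IsHermitian)
    (hball : (1 - ∑ j, (X j) ^ 2).PosSemidef) :
    ‖∑ j, (X j) ⊗ₖ ((X j).map (starRingEnd ℂ))‖ ≤ 1 := by
  have hconj : ∀ j a b, starRingEnd ℂ (X j a b) = X j b a := by
    intro j a b
    conv_rhs => rw [← (hX j).eq]
    rfl
  set T := ∑ j, (X j) ⊗ₖ ((X j).map (starRingEnd ℂ)) with hT_def
  have hT : T.IsHermitian := by
    rw [Matrix.IsHermitian, hT_def, conjTranspose_sum]
    refine Finset.sum_congr rfl fun j _ => ?_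
    ext ⟨i, l⟩ ⟨k, m⟩
    simp [Complex.star_def, hconj]
  refine bridge T hT ?_
  intro y
  set V : Matrix (Fin n) (Fin n) ℂ := Matrix.of (fun i j => y (i, j)) with hV_def
  have hy : y = fun p : Fin n × Fin n => V p.1 p.2 := funext fun p => rfl
  set S := ∑ j, (X j) ^ 2 with hS_def
  -- z as sum of traces
  have hz0 : star y ⬝ᵥ (T *ᵥ y)
      = ∑ j, star y ⬝ᵥ (((X j) ⊗ₖ ((X j).map (starRingEnd ℂ))) *ᵥ y) := by
    rw [hT_def]
    simp only [dotProduct, mulVec, Matrix.sum_apply, Finset.sum_mul, Finset.mul_sum]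
    exact (Finset.sum_congr rfl fun p _ => Finset.sum_comm).trans Finset.sum_comm
  have hz : star y ⬝ᵥ (T *ᵥ y) = ∑ j, trace (Vᴴ * X j * V * X j) := by
    rw [hz0]
    refine Finset.sum_congr rfl fun j _ => ?_
    rw [hy, klem (X j) (X j) V, (hX j).eq]
  -- Euclidean vectors
  set f : EuclideanSpace ℂ (Fin d × (Fin n × Fin n)) :=
    (WithLp.equiv 2 _).symm (fun p => (X p.1 * V) p.2.1 p.2.2) with hf_def
  set g : EuclideanSpace ℂ (Fin d × (Fin n × Fin n)) :=
    (WithLp.equiv 2 _).symm (fun p => (V * X p.1) p.2.1 p.2.2) with hg_def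
  have hinner : (inner ℂ g f : ℂ) = ∑ j, trace ((V * X j)ᴴ * (X j * V)) := by
    simp only [PiLp.inner_apply, RCLike.inner_apply, hf_def, hg_def,
      WithLp.equiv_symm_apply, PiLp.toLp_apply, Fintype.sum_prod_type]
    refine Finset.sum_congr rfl fun j _ => ?_
    rw [trace_lem]
    rw [Fintype.sum_prod_type]
    exact Finset.sum_congr rfl fun _ _ => Finset.sum_congr rfl fun _ _ => mul_comm _ _
  have hcycle : ∀ j, trace ((V * X j)ᴴ * (X j * V)) = trace (Vᴴ * X j * V * X j) := by
    intro j
    rw [conjTranspose_mul, (hX j).eq]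
    calc trace (X j * Vᴴ * (X j * V)) = trace (X j * (Vᴴ * X j * V)) := by
          congr 1
          noncomm_ring
      _ = trace (Vᴴ * X j * V * X j) := trace_mul_comm _ _
  have hzf : star y ⬝ᵥ (T *ᵥ y) = (inner ℂ g f : ℂ) := by
    rw [hz, hinner]
    exact Finset.sum_congr rfl fun j _ => (hcycle j).symm
  -- norms
  have hfsq : ‖f‖ ^ 2 = (∑ j, trace ((X j * V)ᴴ * (X j * V))).re := by
    rw [PiLp.norm_sq_eq_of_L2]
    rw [Complex.re_sum]
    rw [Fintype.sum_prod_type]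
    refine Finset.sum_congr rfl fun j _ => ?_
    rw [trace_lem, Complex.re_sum]
    refine Finset.sum_congr rfl fun p _ => ?_
    simp [hf_def, WithLp.equiv_symm_apply, PiLp.toLp_apply, Complex.normSq_apply, Complex.mul_re,
      Complex.sq_norm, Complex.normSq]
  have hgsq : ‖g‖ ^ 2 = (∑ j, trace ((V * X j)ᴴ * (V * X j))).re := by
    rw [PiLp.norm_sq_eq_of_L2]
    rw [Complex.re_sum]
    rw [Fintype.sum_prod_type]
    refine Finset.sum_congr rfl fun j _ => ?_
    rw [trace_lem, Complex.re_sum]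
    refine Finset.sum_congr rfl fun p _ => ?_
    simp [hg_def, WithLp.equiv_symm_apply, PiLp.toLp_apply, Complex.normSq_apply, Complex.mul_re,
      Complex.sq_norm, Complex.normSq]
  have hc : (star y ⬝ᵥ y).re = (trace (Vᴴ * V)).re := by
    rw [trace_lem, hy]
    simp [dotProduct]
  -- f bound
  have hfsum : ∑ j, (X j * V)ᴴ * (X j * V) = Vᴴ * S * V := by
    have e : Vᴴ * S * V = ∑ j, Vᴴ * (X j) ^ 2 * V := by
      rw [hS_def, Finset.mul_sum, Finset.sum_mul]
    rw [e]
    refine Finset.sum_congr rfl fun j _ => ?_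
    rw [conjTranspose_mul, (hX j).eq, sq]
    noncomm_ring
  have hfle : ‖f‖ ^ 2 ≤ (star y ⬝ᵥ y).re := by
    have e : (∑ j, trace ((X j * V)ᴴ * (X j * V))) = trace (Vᴴ * S * V) := by
      rw [← trace_sum, hfsum]
    rw [hfsq, hc, e]
    have hpsd := hball.conjTranspose_mul_mul_same V
    have htr := trace_nonneg' _ hpsd
    have hexp : Vᴴ * (1 - S) * V = Vᴴ * V - Vᴴ * S * V := by noncomm_ring
    rw [hexp] at htr
    have := (Complex.le_def.mp htr).1
    simp only [trace_sub, Complex.sub_re, Complex.zero_re] at this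
    linarith
  -- g bound
  have hgsum : ∑ j, trace ((V * X j)ᴴ * (V * X j)) = trace (V * S * Vᴴ) := by
    have : ∀ j, trace ((V * X j)ᴴ * (V * X j)) = trace (V * (X j) ^ 2 * Vᴴ) := by
      intro j
      rw [conjTranspose_mul, (hX j).eq]
      calc trace (X j * Vᴴ * (V * X j))
          = trace ((V * X j) * (X j * Vᴴ)) := trace_mul_comm _ _
        _ = trace (V * (X j) ^ 2 * Vᴴ) := by
            congr 1
            rw [sq]
            noncomm_ring
    rw [Finset.sum_congr rfl fun j _ => this j, ← trace_sum, hS_def, Finset.mul_sum,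
      Finset.sum_mul]
  have hgle : ‖g‖ ^ 2 ≤ (star y ⬝ᵥ y).re := by
    rw [hgsq, hgsum, hc, trace_mul_comm Vᴴ V]
    have hpsd := hball.mul_mul_conjTranspose_same V
    have htr := trace_nonneg' _ hpsd
    have hexp : V * (1 - S) * Vᴴ = V * Vᴴ - V * S * Vᴴ := by noncomm_ring
    rw [hexp] at htr
    have := (Complex.le_def.mp htr).1
    simp only [trace_sub, Complex.sub_re, Complex.zero_re] at this
    linarith
  -- conclude
  rw [hzf]
  calc ‖(inner ℂ g f : ℂ)‖ = ‖(inner ℂ g f : ℂ)‖ := rfl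
    _ ≤ ‖g‖ * ‖f‖ := norm_inner_le_norm _ _
    _ ≤ (star y ⬝ᵥ y).re := by nlinarith [norm_nonneg f, norm_nonneg g]
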